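/- The recursively defined expected waiting times \tilde{w}_k(n) are strictly increasing in n for each fixed k: \tilde{w}_k(n+1) > \tilde{w}_k(n) for all n \geq 0 and all k = 0, \ldots, M. -/

import Mathlib

open Real Finset

open Real Finset

lemma sum_pois_hasDerivAt (μ : ℝ) (n : ℕ) (x : ℝ) :
    HasDerivAt (fun y => ∑ i ∈ Finset.range (n+1),
      Real.exp (-μ * y) * (μ * y) ^ i / (Nat.factorial i))
      (-μ * (Real.exp (-μ * x) * (μ * x) ^ n / (Nat.factorial n))) x := by
  have he : HasDerivAt (fun y : ℝ => Real.exp (-μ * y)) (-μ * Real.exp (-μ * x)) x := by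
    have h := HasDerivAt.exp ((hasDerivAt_id x).const_mul (-μ))
    simpa [mul_comm] using h
  induction n with
  | zero => simpa using he
  | succ n ih =>
    have hp : HasDerivAt (fun y : ℝ => (μ * y) ^ (n+1)) ((↑(n+1) : ℝ) * (μ*x)^n * μ) x := by
      have := ((hasDerivAt_id x).const_mul μ).fun_pow (n+1)
      simpa [mul_comm, Nat.add_sub_cancel] using this
    have hterm : HasDerivAt
        (fun y => Real.exp (-μ * y) * (μ * y) ^ (n+1) / (Nat.factorial (n+1)))
        ((-μ * Real.exp (-μ * x) * (μ * x) ^ (n+1)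
          + Real.exp (-μ*x) * ((↑(n+1) : ℝ) * (μ*x)^n * μ)) / (Nat.factorial (n+1))) x :=
      (he.mul hp).div_const _
    have h := ih.add hterm
    have hgoal : HasDerivAt (fun y => (∑ i ∈ Finset.range (n+1),
        Real.exp (-μ * y) * (μ * y) ^ i / (Nat.factorial i))
        + Real.exp (-μ * y) * (μ * y) ^ (n+1) / (Nat.factorial (n+1)))
        (-μ * (Real.exp (-μ * x) * (μ * x) ^ (n+1) / (Nat.factorial (n+1)))) x := by
      refine h.congr_deriv ?_
      have hf : (Nat.factorial (n+1) : ℝ) = (↑(n+1) : ℝ) * Nat.factorial n := by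
        push_cast [Nat.factorial_succ]; ring
      have h1 : (Nat.factorial n : ℝ) ≠ 0 := Nat.cast_ne_zero.mpr (Nat.factorial_ne_zero n)
      have h2 : (↑(n+1) : ℝ) ≠ 0 := by positivity
      rw [hf]
      field_simp
      ring
    convert hgoal using 2 with y
    rw [Finset.sum_range_succ]

lemma E_eq (μ : ℝ) (hμ : 0 < μ) (E : ℝ → ℕ → ℝ) (hE0 : ∀ s, E s 0 = 0)
    (hE : ∀ s n, 1 ≤ n → E s n = ∫ x in (0:ℝ)..s,
      x * (μ ^ n * x ^ (n - 1) * Real.exp (-μ * x) / (Nat.factorial (n - 1)))) :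
    ∀ (s : ℝ) (n : ℕ), E s n = ((n : ℝ) / μ) *
      (1 - ∑ i ∈ Finset.range (n+1), Real.exp (-μ*s) * (μ*s)^i / (Nat.factorial i)) := by
  intro s n
  match n with
  | 0 => simp [hE0]
  | (n+1) =>
    rw [hE s (n+1) (by omega)]
    simp only [Nat.add_sub_cancel]
    have key : ∀ x ∈ Set.uIcc (0:ℝ) s, HasDerivAt
        (fun y => ((↑(n+1) : ℝ) / μ) * (1 - ∑ i ∈ Finset.range (n+2),
          Real.exp (-μ*y) * (μ*y)^i / (Nat.factorial i)))
        (x * (μ ^ (n+1) * x ^ n * Real.exp (-μ * x) / (Nat.factorial n))) x := by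
      intro x _
      have h := ((sum_pois_hasDerivAt μ (n+1) x).const_sub 1).const_mul ((↑(n+1) : ℝ) / μ)
      refine h.congr_deriv ?_
      have h1 : (Nat.factorial n : ℝ) ≠ 0 := Nat.cast_ne_zero.mpr (Nat.factorial_ne_zero n)
      have h2 : (↑(n+1) : ℝ) ≠ 0 := by positivity
      have hf : (Nat.factorial (n+1) : ℝ) = (↑(n+1) : ℝ) * Nat.factorial n := by
        push_cast [Nat.factorial_succ]; ring
      rw [hf]
      field_simp
      ring
    have hint : IntervalIntegrable
        (fun x => x * (μ ^ (n+1) * x ^ n * Real.exp (-μ * x) / (Nat.factorial n)))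
        MeasureTheory.volume 0 s := by
      apply Continuous.intervalIntegrable
      continuity
    rw [intervalIntegral.integral_eq_sub_of_hasDerivAt key hint]
    have h0 : ∑ i ∈ Finset.range (n+2), Real.exp (-μ*0) * (μ*0)^i / (Nat.factorial i) = 1 := by
      rw [Finset.sum_eq_single 0]
      · simp
      · intro i _ hi
        have : (μ * 0 : ℝ) ^ i = 0 := by
          rw [mul_zero]; exact zero_pow hi
        simp [this, hi]
      · simp
    rw [h0]
    ring

/-- The backward waiting-time recursion with terminal condition `w̃_M(n) = n/μ`
is strictly increasing in `n` for each fixed `k`: `w̃_k(n+1) > w̃_k(n)`. -/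
theorem wtilde_strictMono (μ : ℝ) (hμ : 0 < μ) (M : ℕ) (t : ℕ → ℝ) (ht : ∀ k, 0 ≤ t k)
    (Pois : ℝ → ℕ → ℝ)
    (hPois : ∀ s i, Pois s i = Real.exp (-μ * s) * (μ * s) ^ i / (Nat.factorial i))
    (E : ℝ → ℕ → ℝ)
    (hE0 : ∀ s, E s 0 = 0)
    (hE : ∀ s n, 1 ≤ n → E s n = ∫ x in (0:ℝ)..s,
      x * (μ ^ n * x ^ (n - 1) * Real.exp (-μ * x) / (Nat.factorial (n - 1))))
    (w : ℕ → ℕ → ℝ)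
    (hwM : ∀ n, w M n = (n : ℝ) / μ)
    (hwk : ∀ k, k < M → ∀ n, w k n =
      E (t k) n + ∑ i ∈ Finset.range n, Pois (t k) i * (t k + w (k + 1) (n - i + 1))) :
    ∀ k ≤ M, ∀ n : ℕ, w k n < w k (n + 1) := by
  have hμ' : μ ≠ 0 := ne_of_gt hμ
  have hPnn : ∀ (s : ℝ) (i : ℕ), 0 ≤ s → 0 ≤ Pois s i := by
    intro s i hs
    rw [hPois]
    have : 0 ≤ μ * s := by positivity
    positivity
  have hEid : ∀ (s : ℝ) (n : ℕ), E s n = ((n : ℝ) / μ) *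
      (1 - ∑ i ∈ Finset.range (n+1), Pois s i) := by
    intro s n
    have h := E_eq μ hμ E hE0 hE s n
    rw [h]
    congr 1
    congr 1
    apply Finset.sum_congr rfl
    intro i _
    rw [hPois]
  have hEnn : ∀ (s : ℝ) (n : ℕ), 0 ≤ s → 0 ≤ E s n := by
    intro s n hs
    match n with
    | 0 => rw [hE0]
    | (m+1) =>
      rw [hE s (m+1) (by omega)]
      apply intervalIntegral.integral_nonneg hs
      intro x hx
      have hx0 : 0 ≤ x := hx.1
      positivity
  suffices H : ∀ j, ∀ k, k + j = M →
      (∀ n, 0 ≤ w k n) ∧ (∀ n, w k n + 1/μ ≤ w k (n+1)) by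
    intro k hk n
    have h2 := (H (M - k) k (by omega)).2 n
    have h3 : 0 < 1/μ := by positivity
    linarith
  intro j
  induction j with
  | zero =>
    intro k hk
    have hkM : k = M := by omega
    subst hkM
    constructor
    · intro n; rw [hwM]; positivity
    · intro n
      rw [hwM, hwM]
      rw [← add_div]
      push_cast
      ring_nf
      exact le_rfl
  | succ j ih =>
    intro k hk
    have hkM : k < M := by omega
    obtain ⟨ih0, ih1⟩ := ih (k+1) (by omega)
    have hs : 0 ≤ t k := ht k
    constructor
    · intro n
      rw [hwk k hkM n]
      have hsum : 0 ≤ ∑ i ∈ Finset.range n, Pois (t k) i * (t k + w (k+1) (n - i + 1)) := by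
        apply Finset.sum_nonneg
        intro i _
        exact mul_nonneg (hPnn _ i hs) (by have := ih0 (n-i+1); linarith)
      have := hEnn (t k) n hs
      linarith
    · intro n
      rw [hwk k hkM n, hwk k hkM (n+1)]
      rw [Finset.sum_range_succ]
      -- index simplification for the last term : n+1-n+1 = 2
      have hlast : n + 1 - n + 1 = 2 := by omega
      rw [hlast]
      -- key sum comparison
      have h1 : ∑ i ∈ Finset.range n,
          (Pois (t k) i * (t k + w (k+1) (n - i + 1)) + Pois (t k) i * (1/μ))
          ≤ ∑ i ∈ Finset.range n, Pois (t k) i * (t k + w (k+1) (n + 1 - i + 1)) := by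
        apply Finset.sum_le_sum
        intro i hi
        have hi' : i < n := Finset.mem_range.mp hi
        have hidx : n + 1 - i + 1 = (n - i + 1) + 1 := by omega
        rw [hidx]
        have hw := ih1 (n - i + 1)
        have hp := hPnn (t k) i hs
        nlinarith
      rw [Finset.sum_add_distrib, ← Finset.sum_mul] at h1
      -- relation between Pois (n+1) and Pois n
      have hrel : ((n:ℝ)+1) * Pois (t k) (n+1) = μ * (t k) * Pois (t k) n := by
        rw [hPois, hPois]
        have hf : (Nat.factorial (n+1) : ℝ) = (↑(n+1) : ℝ) * Nat.factorial n := by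
          push_cast [Nat.factorial_succ]; ring
        have h1 : (Nat.factorial n : ℝ) ≠ 0 := Nat.cast_ne_zero.mpr (Nat.factorial_ne_zero n)
        have h2 : (↑(n+1) : ℝ) ≠ 0 := by positivity
        rw [hf, pow_succ]
        field_simp
        push_cast
        ring
      -- E difference identity
      have hEdiff : E (t k) (n+1) = E (t k) n + 1/μ
          - (∑ i ∈ Finset.range n, Pois (t k) i) * (1/μ)
          - Pois (t k) n * (1/μ) - Pois (t k) n * (t k) := by
        rw [hEid (t k) (n+1), hEid (t k) n]
        rw [show n+1+1 = n+2 from rfl, Finset.sum_range_succ, Finset.sum_range_succ]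
        field_simp
        push_cast at hrel ⊢
        nlinarith [hrel]
      -- w' (2) ≥ 1/μ + 1/μ
      have hw2 : 1/μ + 1/μ ≤ w (k+1) 2 := by
        have := ih0 0
        have h1 := ih1 0
        have h2 := ih1 1
        linarith
      have hpn := hPnn (t k) n hs
      have hpn' : 0 ≤ Pois (t k) n * (1/μ) := by positivity
      have hw2' : Pois (t k) n * (1/μ) + Pois (t k) n * (1/μ)
          ≤ Pois (t k) n * w (k+1) 2 := by nlinarith
      have hlastterm : Pois (t k) n * (t k) + Pois (t k) n * (1/μ) + Pois (t k) n * (1/μ)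
          ≤ Pois (t k) n * (t k + w (k+1) 2) := by nlinarith
      linarith
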